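/- Let K be an algebraically closed field of characteristic p > 0 and f ∈ K[x] an additive polynomial (f(x+y) = f(x)+f(y) identically) whose set of roots in K is exactly the prime field F_p. Then f = a · (x^p - x)^{p^n} for some n < ω and a ∈ K, a ≠ 0. -/

import Mathlib

open Polynomial

theorem additive_polynomial_kernel_Fp (p : ℕ) [Fact p.Prime] (K : Type*) [Field K] [CharP K p]
    [IsAlgClosed K] (f : K[X])
    (hadd : ∀ x y : K, f.eval (x + y) = f.eval x + f.eval y)
    (hker : {x : K | f.eval x = 0} = Set.range (ZMod.castHom (dvd_refl p) K)) :
    ∃ (n : ℕ) (a : K), a ≠ 0 ∧ f = C a * (X ^ p - X) ^ (p ^ n) := by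
  classical
  have hp : p.Prime := Fact.out
  have hp1 : 1 < p := hp.one_lt
  set Φ := ZMod.castHom (dvd_refl p) K with hΦ
  have hmem : ∀ c : K, f.eval c = 0 ↔ c ∈ Set.range Φ := fun c => Set.ext_iff.mp hker c
  have h0 : f.eval 0 = 0 := by
    have h := hadd 0 0
    rw [add_zero] at h
    exact (left_eq_add.mp h)
  have hf : f ≠ 0 := by
    rintro rfl
    have hfin : (Set.range Φ).Finite := Set.finite_range _
    have huniv : {x : K | (0 : K[X]).eval x = 0} = Set.univ := by simp
    rw [huniv] at hker
    exact Set.infinite_univ (hker ▸ hfin)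
  -- translation invariance
  have hcomp : ∀ c : K, f.eval c = 0 → f.comp (X + C c) = f := by
    intro c hc
    apply Polynomial.funext
    intro x
    simp [eval_comp, hadd x c, hc]
  set m := f.rootMultiplicity 0 with hmdef
  have hm : ∀ c : K, f.eval c = 0 → f.rootMultiplicity c = m := by
    intro c hc
    rw [rootMultiplicity_eq_natTrailingDegree, hcomp c hc, hmdef,
      rootMultiplicity_eq_natTrailingDegree']
  have hm0 : 0 < m := (rootMultiplicity_pos hf).mpr h0
  -- roots multiset
  have hinj : Function.Injective Φ := Φ.injective
  have hnodup : (Finset.univ.val.map Φ).Nodup :=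
    Finset.univ.nodup.map hinj
  have hroots : f.roots = m • (Finset.univ.val.map Φ) := by
    refine Multiset.ext.mpr fun c => ?_
    rw [count_roots, Multiset.count_nsmul]
    by_cases hc : f.eval c = 0
    · have hcm : c ∈ Finset.univ.val.map Φ := by
        obtain ⟨i, rfl⟩ := (hmem c).mp hc
        exact Multiset.mem_map.mpr ⟨i, Finset.mem_univ_val i, rfl⟩
      rw [hm c hc, Multiset.count_eq_one_of_mem hnodup hcm, mul_one]
    · have hcm : c ∉ Finset.univ.val.map Φ := by
        intro h
        obtain ⟨i, _, rfl⟩ := Multiset.mem_map.mp h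
        exact hc ((hmem (Φ i)).mpr ⟨i, rfl⟩)
      rw [Multiset.count_eq_zero_of_notMem hcm, mul_zero,
        rootMultiplicity_eq_zero hc]
  -- product formula over ZMod p
  have hcard : Fintype.card (ZMod p) = p := ZMod.card p
  have hZroots : (X ^ p - X : (ZMod p)[X]).roots = Finset.univ.val := by
    have := FiniteField.roots_X_pow_card_sub_X (ZMod p)
    rwa [hcard] at this
  have hZdeg : (X ^ p - X : (ZMod p)[X]).natDegree = p :=
    FiniteField.X_pow_card_sub_X_natDegree_eq (ZMod p) hp1
  have hZmonic : (X ^ p - X : (ZMod p)[X]).Monic := by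
    have : ((X : (ZMod p)[X])).degree < (X ^ p : (ZMod p)[X]).degree := by
      rw [degree_X, degree_X_pow]
      exact_mod_cast hp1
    simpa using (monic_X_pow p).sub_of_left this
  have hZsplits : Splits (X ^ p - X : (ZMod p)[X]) := by
    rw [splits_iff_card_roots, hZroots, hZdeg]
    simp [hcard]
  have hZprod : (Finset.univ.val.map fun i : ZMod p => (X : (ZMod p)[X]) - C i).prod
      = X ^ p - X := by
    have h := hZsplits.eq_prod_roots
    rw [hZroots, hZmonic.leadingCoeff, map_one, one_mul] at h
    exact h.symm
  have hKprod : (Finset.univ.val.map fun i : ZMod p => (X : K[X]) - C (Φ i)).prod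
      = X ^ p - X := by
    have h := congrArg (Polynomial.map Φ) hZprod
    rw [Polynomial.map_multiset_prod, Multiset.map_map] at h
    simpa using h
  -- f = C a * (X^p - X)^m
  have hsplit : Splits f := IsAlgClosed.splits f
  set a := f.leadingCoeff with hadef
  have ha : a ≠ 0 := leadingCoeff_ne_zero.mpr hf
  have hfeq : f = C a * (X ^ p - X) ^ m := by
    conv_lhs => rw [hsplit.eq_prod_roots]
    rw [hroots, Multiset.map_nsmul, Multiset.prod_nsmul, Multiset.map_map]
    rw [show ((fun a => X - C a) ∘ Φ) = fun i : ZMod p => (X : K[X]) - C (Φ i) from rfl, hKprod]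
  -- evaluation formula
  have heval : ∀ x : K, f.eval x = a * (x ^ p - x) ^ m := by
    intro x
    rw [hfeq]
    simp
  -- surjectivity of x ↦ x^p - x
  have hGsurj : ∀ u : K, ∃ x : K, x ^ p - x = u := by
    intro u
    have hdeg : ((X : K[X]) ^ p - (X + C u)).degree = (p : WithBot ℕ) := by
      have h1 : ((X : K[X]) + C u).degree < ((X : K[X]) ^ p).degree := by
        rw [degree_X_add_C, degree_X_pow]
        exact_mod_cast hp1
      rw [degree_sub_eq_left_of_degree_lt h1, degree_X_pow]
    obtain ⟨x, hx⟩ := IsAlgClosed.exists_root ((X : K[X]) ^ p - (X + C u))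
      (by rw [hdeg]; exact_mod_cast (Nat.cast_ne_zero (R := WithBot ℕ)).mpr hp.ne_zero)
    refine ⟨x, ?_⟩
    simp only [IsRoot.def, eval_sub, eval_add, eval_pow, eval_X, eval_C, sub_eq_zero] at hx
    rw [hx]
    ring
  -- additivity of u ↦ u^m
  have hpow : ∀ u v : K, (u + v) ^ m = u ^ m + v ^ m := by
    intro u v
    obtain ⟨x, hx⟩ := hGsurj u
    obtain ⟨y, hy⟩ := hGsurj v
    have h := hadd x y
    rw [heval, heval, heval, add_pow_char] at h
    have h2 : x ^ p + y ^ p - (x + y) = u + v := by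
      rw [← hx, ← hy]; ring
    rw [h2, hx, hy] at h
    exact mul_left_cancel₀ ha (h.trans (mul_add a _ _).symm)
  -- decompose m = p^n * q
  set n := m.factorization p with hndef
  set q := m / p ^ n with hqdef
  have hqm : p ^ n * q = m := Nat.ordProj_mul_ordCompl_eq_self m p
  have hq : ¬ p ∣ q := Nat.not_dvd_ordCompl hp hm0.ne'
  have hq0 : q ≠ 0 := by
    intro h
    rw [h, mul_zero] at hqm
    exact hm0.ne' hqm.symm
  -- q-th power map is additive
  have hqpow : ∀ u v : K, (u + v) ^ q = u ^ q + v ^ q := by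
    intro u v
    obtain ⟨x, hx⟩ := IsAlgClosed.exists_pow_nat_eq u (n := p ^ n) (pow_pos hp.pos n)
    obtain ⟨y, hy⟩ := IsAlgClosed.exists_pow_nat_eq v (n := p ^ n) (pow_pos hp.pos n)
    have h := hpow x y
    calc (u + v) ^ q = ((x + y) ^ p ^ n) ^ q := by
          rw [add_pow_char_pow, hx, hy]
      _ = (x + y) ^ m := by rw [← pow_mul, hqm]
      _ = x ^ m + y ^ m := h
      _ = u ^ q + v ^ q := by
          rw [← hqm, pow_mul, pow_mul, hx, hy]
  -- conclude q = 1
  have hq1 : q = 1 := by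
    by_contra hq1
    have hq2 : 2 ≤ q := (Nat.two_le_iff q).mpr ⟨hq0, hq1⟩
    have hP : ((X : K[X]) + 1) ^ q - X ^ q - 1 = 0 := by
      apply Polynomial.funext
      intro x
      simp only [eval_sub, eval_pow, eval_add, eval_one, eval_X, eval_zero]
      have := hqpow x 1
      rw [one_pow] at this
      rw [this]
      ring
    have hc := congrArg (fun g : K[X] => g.coeff 1) hP
    simp only [coeff_sub, Polynomial.coeff_X_add_one_pow, coeff_zero, coeff_one,
      coeff_X_pow] at hc
    rw [if_neg (fun h => hq1 h.symm), if_neg (one_ne_zero (α := ℕ))] at hc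
    rw [Nat.choose_one_right] at hc
    have hqK : (q : K) = 0 := by simpa using hc
    exact hq ((CharP.cast_eq_zero_iff K p q).mp hqK)
  refine ⟨n, a, ha, ?_⟩
  rw [hfeq, ← hqm, hq1, mul_one]
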